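/- arXiv:2107.02570 — 6 statements merged into one kernel-verified Lean document; each statement's English description precedes it below -/
import Mathlib

section
/- Define the monomial map φ : ℝ² × ℝ → ℝ⁷ by φ((x, y), r) = (x, y, x·y, x², y², r, r²). For every circle h = (q, s) with q ∈ ℝ² and s > 0, there exist vectors w₁, w₂ ∈ ℝ⁷ and reals b₁, b₂ such that for every closed disk d = (p, r) with p ∈ ℝ² and r ≥ 0: dist(p, q) + r ≥ s (i.e., d ∈ 𝒟(h_≥)) if and only if ⟨w₁, φ(p, r)⟩ ≥ b₁ or ⟨w₂, φ(p, r)⟩ ≥ b₂. In other words, under the lifting φ each classifier 𝒟(h_≥) becomes a union of two closed halfspaces of ℝ⁷. -/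
open scoped RealInnerProductSpace

noncomputable section

/-- The monomial lifting map `φ : ℝ² × ℝ → ℝ⁷`,
`φ((x, y), r) = (x, y, x·y, x², y², r, r²)`. -/
def phiLift (p : EuclideanSpace ℝ (Fin 2)) (r : ℝ) : EuclideanSpace ℝ (Fin 7) :=
  (WithLp.equiv 2 (Fin 7 → ℝ)).symm
    ![p 0, p 1, p 0 * p 1, (p 0) ^ 2, (p 1) ^ 2, r, r ^ 2]

/-- For every circle `h = (q, s)` with `s > 0` there are vectors
`w₁, w₂ ∈ ℝ⁷` and reals `b₁, b₂` such that for every closed disk `d = (p, r)` with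
`r ≥ 0`: `dist p q + r ≥ s` (i.e. `d ∈ 𝒟(h_≥)`) iff `⟨w₁, φ(p, r)⟩ ≥ b₁` or
`⟨w₂, φ(p, r)⟩ ≥ b₂`; i.e. under the lifting `φ` the classifier `𝒟(h_≥)` becomes a
union of two closed halfspaces of `ℝ⁷`. -/
theorem disk_classifier_halfspaces (q : EuclideanSpace ℝ (Fin 2)) (s : ℝ) (hs : 0 < s) :
    ∃ (w₁ w₂ : EuclideanSpace ℝ (Fin 7)) (b₁ b₂ : ℝ),
      ∀ (p : EuclideanSpace ℝ (Fin 2)) (r : ℝ), 0 ≤ r →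
        (s ≤ dist p q + r ↔ b₁ ≤ ⟪w₁, phiLift p r⟫ ∨ b₂ ≤ ⟪w₂, phiLift p r⟫) := by
  refine ⟨(WithLp.equiv 2 (Fin 7 → ℝ)).symm
      ![-2 * q 0, -2 * q 1, 0, 1, 1, 2 * s, -1],
    (WithLp.equiv 2 (Fin 7 → ℝ)).symm ![0, 0, 0, 0, 0, 1, 0],
    s ^ 2 - (q 0) ^ 2 - (q 1) ^ 2, s, ?_⟩
  intro p r hr
  have hD : 0 ≤ dist p q := dist_nonneg
  have hDsq : dist p q ^ 2 = (p 0 - q 0) ^ 2 + (p 1 - q 1) ^ 2 := by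
    rw [EuclideanSpace.dist_eq, Real.sq_sqrt (by positivity)]
    simp [Fin.sum_univ_two, Real.dist_eq, sq_abs]
  have h1 : (s ^ 2 - (q 0) ^ 2 - (q 1) ^ 2 ≤
      ⟪(WithLp.equiv 2 (Fin 7 → ℝ)).symm
        ![-2 * q 0, -2 * q 1, 0, 1, 1, 2 * s, -1], phiLift p r⟫) ↔
      (s - r) ^ 2 ≤ dist p q ^ 2 := by
    simp only [phiLift, PiLp.inner_apply, RCLike.inner_apply, conj_trivial,
      WithLp.equiv_symm_apply, PiLp.toLp_apply, Fin.sum_univ_succ, Fin.sum_univ_zero, Matrix.cons_val_succ,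
      Matrix.cons_val_zero]
    rw [hDsq]
    norm_num [Matrix.cons_val_zero, Matrix.cons_val_one, Matrix.cons_val]
    constructor <;> intro h <;> nlinarith
  have h2 : (s ≤ ⟪(WithLp.equiv 2 (Fin 7 → ℝ)).symm
      ![0, 0, 0, 0, 0, 1, 0], phiLift p r⟫) ↔ s ≤ r := by
    simp only [phiLift, PiLp.inner_apply, RCLike.inner_apply, conj_trivial,
      WithLp.equiv_symm_apply, PiLp.toLp_apply, Fin.sum_univ_succ, Fin.sum_univ_zero, Matrix.cons_val_succ,
      Matrix.cons_val_zero]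
    norm_num [Matrix.cons_val]
  rw [h1, h2]
  constructor
  · intro h
    by_cases hsr : s ≤ r
    · exact Or.inr hsr
    · left; nlinarith
  · rintro (h | h)
    · by_cases hsr : s ≤ r
      · linarith
      · nlinarith
    · linarith
end
end

section
/- The range spaces (𝒟, H_≤) and (𝒟, H_≥) have constant (finite) VC dimension: there exists n₀ ∈ ℕ such that every finite set of closed disks that is shattered by H_≤, and every finite set of closed disks that is shattered by H_≥, has cardinality at most n₀. -/
noncomputable section

/-- The ground set `𝒟` of closed disks in the plane: pairs `(center, radius)`
with radius `≥ 0`. -/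
def Ddisks : Set (EuclideanSpace ℝ (Fin 2) × ℝ) := {d | 0 ≤ d.2}

/-- `𝒟(h_≥)` for the circle `h = (q, s)`: the disks lying outside `h` or
intersecting the boundary of `h`. -/
def Dge (q : EuclideanSpace ℝ (Fin 2)) (s : ℝ) : Set (EuclideanSpace ℝ (Fin 2) × ℝ) :=
  {d | d ∈ Ddisks ∧ s ≤ dist d.1 q + d.2}

/-- `𝒟(h_≤)` for the circle `h = (q, s)`: the disks lying inside `h` or
intersecting the boundary of `h`. -/
def Dle (q : EuclideanSpace ℝ (Fin 2)) (s : ℝ) : Set (EuclideanSpace ℝ (Fin 2) × ℝ) :=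
  {d | d ∈ Ddisks ∧ dist d.1 q - d.2 ≤ s}

/-- The family `H_≥ = {𝒟(h_≥) : h a circle}`. -/
def Hge : Set (Set (EuclideanSpace ℝ (Fin 2) × ℝ)) :=
  {f | ∃ q s, 0 < s ∧ f = Dge q s}

/-- The family `H_≤ = {𝒟(h_≤) : h a circle}`. -/
def Hle : Set (Set (EuclideanSpace ℝ (Fin 2) × ℝ)) :=
  {f | ∃ q s, 0 < s ∧ f = Dle q s}

/-- A family `F` of subsets of a ground set shatters `Y` if every subset of `Y` is
cut out by some member of `F`. -/
def Shatters {X : Type*} (F : Set (Set X)) (Y : Set X) : Prop :=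
  ∀ S ⊆ Y, ∃ f ∈ F, f ∩ Y = S

/-! ### Auxiliary material -/

/-- Shattering is monotone under taking subsets. -/
lemma shatters_mono {X : Type*} {F : Set (Set X)} {Y Y' : Set X}
    (hsub : Y' ⊆ Y) (hsh : Shatters F Y) : Shatters F Y' := by
  intro S hS
  obtain ⟨f, hf, hfY⟩ := hsh S (hS.trans hsub)
  refine ⟨f, hf, ?_⟩
  apply Set.Subset.antisymm
  · intro x hx
    rw [← hfY]
    exact ⟨hx.1, hsub hx.2⟩
  · intro x hx
    have hx' : x ∈ f ∩ Y := by rw [hfY]; exact hx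
    exact ⟨hx'.1, hS hx⟩

lemma dudley_aux {X : Type*} (ψ : X → Fin 5 → ℝ) (Y : Finset X)
    (h : ∀ T ⊆ Y, ∃ a : Fin 5 → ℝ, ∀ y ∈ Y, (0 ≤ ∑ i, a i * ψ y i ↔ y ∈ T))
    (g : ↥Y → ℝ) (hsum : (∑ y : ↥Y, g y • ψ ↑y) = 0) (j : ↥Y) (hj : 0 < g j) : False := by
  classical
  set T : Finset X := (Y.attach.filter (fun i => g i ≤ 0)).image Subtype.val with hT
  have hTY : T ⊆ Y := by
    intro x hx
    simp only [hT, Finset.mem_image, Finset.mem_filter] at hx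
    obtain ⟨i, _, rfl⟩ := hx
    exact i.2
  obtain ⟨a, ha⟩ := h T hTY
  have hmem : ∀ y : ↥Y, ((y : X) ∈ T ↔ g y ≤ 0) := by
    intro y
    simp only [hT, Finset.mem_image, Finset.mem_filter, Finset.mem_attach, true_and]
    constructor
    · rintro ⟨i, hi, hiy⟩
      rwa [show i = y from Subtype.ext hiy] at hi
    · intro hy; exact ⟨y, hy, rfl⟩
  have h0 : ∀ i, (∑ y : ↥Y, g y * ψ ↑y i) = 0 := by
    intro i
    have := congrFun hsum i
    simpa [Finset.sum_apply] using this
  have hsum' : (∑ y : ↥Y, g y * ∑ i, a i * ψ ↑y i) = 0 := by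
    have heq : (∑ y : ↥Y, g y * ∑ i, a i * ψ ↑y i)
        = ∑ i, a i * ∑ y : ↥Y, g y * ψ ↑y i := by
      simp_rw [Finset.mul_sum]
      rw [Finset.sum_comm]
      apply Finset.sum_congr rfl
      intro i _
      apply Finset.sum_congr rfl
      intro y _
      ring
    rw [heq]
    simp only [Finset.univ_eq_attach] at h0
    simp [h0]
  have hterm : ∀ y ∈ (Finset.univ : Finset ↥Y), g y * (∑ i, a i * ψ ↑y i) ≤ 0 := by
    intro y _
    rcases le_or_gt (g y) 0 with hgy | hgy
    · have hyT : (y : X) ∈ T := (hmem y).2 hgy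
      have := (ha y y.2).2 hyT
      exact mul_nonpos_of_nonpos_of_nonneg hgy this
    · have hyT : (y : X) ∉ T := fun hyT => absurd ((hmem y).1 hyT) (not_le.2 hgy)
      have hdot : ¬ (0 ≤ ∑ i, a i * ψ ↑y i) := fun hd => hyT ((ha y y.2).1 hd)
      exact le_of_lt (mul_neg_of_pos_of_neg hgy (not_le.1 hdot))
  have hstrict : g j * (∑ i, a i * ψ ↑j i) < 0 := by
    have hyT : (j : X) ∉ T := fun hyT => absurd ((hmem j).1 hyT) (not_le.2 hj)
    have hdot : ¬ (0 ≤ ∑ i, a i * ψ ↑j i) := fun hd => hyT ((ha j j.2).1 hd)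
    exact mul_neg_of_pos_of_neg hj (not_le.1 hdot)
  have hlt : (∑ y : ↥Y, g y * ∑ i, a i * ψ ↑y i) < 0 := by
    calc (∑ y : ↥Y, g y * ∑ i, a i * ψ ↑y i)
        < ∑ _y : ↥Y, (0:ℝ) := Finset.sum_lt_sum hterm ⟨j, Finset.mem_univ j, hstrict⟩
      _ = 0 := by simp
  linarith [hsum', hlt]

/-- Dudley's argument: a class of linear threshold sets in a 5-dimensional
function space cannot shatter more than 5 points. -/
lemma dudley {X : Type*} (ψ : X → Fin 5 → ℝ) (Y : Finset X)
    (h : ∀ T ⊆ Y, ∃ a : Fin 5 → ℝ, ∀ y ∈ Y, (0 ≤ ∑ i, a i * ψ y i ↔ y ∈ T)) :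
    Y.card ≤ 5 := by
  classical
  by_contra hc
  push_neg at hc
  have hnli : ¬ LinearIndependent ℝ (fun y : ↥Y => ψ (y : X)) := by
    intro hli
    have := hli.fintype_card_le_finrank
    rw [Fintype.card_coe, Module.finrank_fin_fun] at this
    omega
  rw [Fintype.not_linearIndependent_iff] at hnli
  obtain ⟨g, hg0, i₀, hi₀⟩ := hnli
  rcases lt_or_gt_of_ne hi₀ with hneg | hpos
  · refine dudley_aux ψ Y h (-g) ?_ i₀ (by simpa using hneg)
    simp only [Pi.neg_apply, neg_smul, Finset.sum_neg_distrib]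
    simpa [Finset.univ_eq_attach] using hg0
  · exact dudley_aux ψ Y h g hg0 i₀ hpos

/-- The linearizing embedding `d = (p, r) ↦ (p₀, p₁, r, ‖p‖² − r², 1)`. -/
def psiD (d : EuclideanSpace ℝ (Fin 2) × ℝ) : Fin 5 → ℝ :=
  ![d.1 0, d.1 1, d.2, (d.1 0)^2 + (d.1 1)^2 - d.2^2, 1]

def aLe (q : EuclideanSpace ℝ (Fin 2)) (s : ℝ) : Fin 5 → ℝ :=
  ![2*q 0, 2*q 1, 2*s, -1, s^2 - (q 0)^2 - (q 1)^2]

def bOne (s : ℝ) : Fin 5 → ℝ := ![0, 0, 1, 0, -s]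

def bTwo (q : EuclideanSpace ℝ (Fin 2)) (s : ℝ) : Fin 5 → ℝ :=
  ![-2*q 0, -2*q 1, 2*s, 1, (q 0)^2 + (q 1)^2 - s^2]

lemma dist_sq (p q : EuclideanSpace ℝ (Fin 2)) :
    dist p q = Real.sqrt ((p 0 - q 0)^2 + (p 1 - q 1)^2) := by
  rw [EuclideanSpace.dist_eq]
  simp [Fin.sum_univ_two, Real.dist_eq, sq_abs]

lemma mem_Dle_iff {d : EuclideanSpace ℝ (Fin 2) × ℝ} (hd : d ∈ Ddisks)
    (q : EuclideanSpace ℝ (Fin 2)) {s : ℝ} (hs : 0 < s) :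
    d ∈ Dle q s ↔ 0 ≤ ∑ i, aLe q s i * psiD d i := by
  have hr : (0:ℝ) ≤ d.2 := hd
  have hsum : (∑ i, aLe q s i * psiD d i)
      = (s + d.2)^2 - ((d.1 0 - q 0)^2 + (d.1 1 - q 1)^2) := by
    simp [aLe, psiD, Fin.sum_univ_five]
    ring
  rw [hsum]
  constructor
  · rintro ⟨-, h⟩
    have h' : dist d.1 q ≤ s + d.2 := by linarith
    rw [dist_sq] at h'
    have := (Real.sqrt_le_iff.1 h').2
    linarith
  · intro h
    refine ⟨hd, ?_⟩
    have h' : dist d.1 q ≤ s + d.2 := by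
      rw [dist_sq, Real.sqrt_le_iff]
      constructor
      · linarith
      · linarith
    linarith

lemma mem_Dge_iff {d : EuclideanSpace ℝ (Fin 2) × ℝ} (hd : d ∈ Ddisks)
    (q : EuclideanSpace ℝ (Fin 2)) {s : ℝ} (hs : 0 < s) :
    d ∈ Dge q s ↔ (0 ≤ ∑ i, bOne s i * psiD d i ∨ 0 ≤ ∑ i, bTwo q s i * psiD d i) := by
  have hr : (0:ℝ) ≤ d.2 := hd
  have h1 : (∑ i, bOne s i * psiD d i) = d.2 - s := by
    simp [bOne, psiD, Fin.sum_univ_five]; ring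
  have h2 : (∑ i, bTwo q s i * psiD d i)
      = ((d.1 0 - q 0)^2 + (d.1 1 - q 1)^2) - (s - d.2)^2 := by
    simp [bTwo, psiD, Fin.sum_univ_five]; ring
  rw [h1, h2]
  constructor
  · rintro ⟨-, h⟩
    rcases le_or_gt s d.2 with hsr | hsr
    · left; linarith
    · right
      have h' : s - d.2 ≤ dist d.1 q := by linarith
      rw [dist_sq] at h'
      have hD : (0:ℝ) ≤ (d.1 0 - q 0)^2 + (d.1 1 - q 1)^2 := by positivity
      have := (Real.le_sqrt (by linarith) hD).1 h'
      linarith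
  · intro h
    refine ⟨hd, ?_⟩
    rcases h with h | h
    · have := dist_nonneg (x := d.1) (y := q)
      linarith
    · rcases le_or_gt s d.2 with hsr | hsr
      · have := dist_nonneg (x := d.1) (y := q)
        linarith
      · have h' : s - d.2 ≤ dist d.1 q := by
          rw [dist_sq]
          exact (Real.le_sqrt (by linarith) (by positivity)).2 (by linarith)
        linarith

/-- `(𝒟, H_≤)` has VC dimension at most 5. -/
lemma hle_card {Y : Set (EuclideanSpace ℝ (Fin 2) × ℝ)} (hYD : Y ⊆ Ddisks)
    (hfin : Y.Finite) (hsh : Shatters Hle Y) : Y.ncard ≤ 5 := by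
  classical
  rw [Set.ncard_eq_toFinset_card Y hfin]
  apply dudley psiD
  intro T hTZ
  have hTY : ↑T ⊆ Y := fun x hx => (Set.Finite.mem_toFinset hfin).1 (hTZ hx)
  obtain ⟨f, ⟨q, s, hs, rfl⟩, hfY⟩ := hsh ↑T hTY
  refine ⟨aLe q s, ?_⟩
  intro y hy
  have hyY : y ∈ Y := (Set.Finite.mem_toFinset hfin).1 hy
  rw [← mem_Dle_iff (hYD hyY) q hs]
  constructor
  · intro hyf
    have hx : y ∈ Dle q s ∩ Y := ⟨hyf, hyY⟩
    rw [hfY] at hx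
    exact hx
  · intro hyT
    have hx : y ∈ (↑T : Set _) := hyT
    rw [← hfY] at hx
    exact hx.1

/-- No 101-element subset of `𝒟` is shattered by `H_≥`. -/
lemma hge_no101 {Y : Set (EuclideanSpace ℝ (Fin 2) × ℝ)} (hYD : Y ⊆ Ddisks)
    (hfin : Y.Finite) (hcard : Y.ncard = 101) (hsh : Shatters Hge Y) : False := by
  classical
  set Z := hfin.toFinset with hZdef
  have hZcard : Z.card = 101 := by
    rw [← Set.ncard_eq_toFinset_card Y hfin]; exact hcard
  have hch : ∀ T ∈ Z.powerset, ∃ a b : Fin 5 → ℝ,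
      ∀ y ∈ Z, (y ∈ T ↔ (0 ≤ ∑ i, a i * psiD y i ∨ 0 ≤ ∑ i, b i * psiD y i)) := by
    intro T hT
    rw [Finset.mem_powerset] at hT
    have hTY : ↑T ⊆ Y := fun x hx => (Set.Finite.mem_toFinset hfin).1 (hT hx)
    obtain ⟨f, ⟨q, s, hs, rfl⟩, hfY⟩ := hsh ↑T hTY
    refine ⟨bOne s, bTwo q s, ?_⟩
    intro y hy
    have hyY : y ∈ Y := (Set.Finite.mem_toFinset hfin).1 hy
    rw [← mem_Dge_iff (hYD hyY) q hs]
    constructor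
    · intro hyT
      have hx : y ∈ (↑T : Set _) := hyT
      rw [← hfY] at hx
      exact hx.1
    · intro hyf
      have hx : y ∈ Dge q s ∩ Y := ⟨hyf, hyY⟩
      rw [hfY] at hx
      exact hx
  set 𝒜 : Finset (Finset (EuclideanSpace ℝ (Fin 2) × ℝ)) := Z.powerset.filter
      (fun A => ∃ a : Fin 5 → ℝ, A = Z.filter (fun y => 0 ≤ ∑ i, a i * psiD y i)) with h𝒜
  have hmem𝒜 : ∀ a : Fin 5 → ℝ, Z.filter (fun y => 0 ≤ ∑ i, a i * psiD y i) ∈ 𝒜 := by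
    intro a
    rw [h𝒜, Finset.mem_filter, Finset.mem_powerset]
    exact ⟨Finset.filter_subset _ _, a, rfl⟩
  have hinj2 : ∀ T ∈ Z.powerset, ∃ P, P ∈ 𝒜 ×ˢ 𝒜 ∧ P.1 ∪ P.2 = T := by
    intro T hT
    obtain ⟨a, b, hab⟩ := hch T hT
    refine ⟨(Z.filter (fun y => 0 ≤ ∑ i, a i * psiD y i),
             Z.filter (fun y => 0 ≤ ∑ i, b i * psiD y i)), ?_, ?_⟩
    · rw [Finset.mem_product]
      exact ⟨hmem𝒜 a, hmem𝒜 b⟩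
    · ext y
      simp only [Finset.mem_union, Finset.mem_filter]
      constructor
      · rintro (⟨hyZ, hya⟩ | ⟨hyZ, hyb⟩)
        · exact (hab y hyZ).2 (Or.inl hya)
        · exact (hab y hyZ).2 (Or.inr hyb)
      · intro hyT
        have hyZ : y ∈ Z := (Finset.mem_powerset.1 hT) hyT
        rcases (hab y hyZ).1 hyT with h | h
        · exact Or.inl ⟨hyZ, h⟩
        · exact Or.inr ⟨hyZ, h⟩
  choose P hP hPT using hinj2
  have hcard1 : Z.powerset.card ≤ (𝒜 ×ˢ 𝒜).card := by
    apply Finset.card_le_card_of_injOn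
      (fun T => if h : T ∈ Z.powerset then P T h else ((∅ : Finset _), (∅ : Finset _)))
    · intro T hT
      simp only [Finset.mem_coe] at hT ⊢
      simp only [dif_pos hT]
      exact hP T hT
    · intro T₁ h₁ T₂ h₂ heq
      simp only [Finset.mem_coe] at h₁ h₂
      simp only [dif_pos h₁, dif_pos h₂] at heq
      rw [← hPT T₁ h₁, ← hPT T₂ h₂, heq]
  have hA_sub : 𝒜.shatterer ⊆ (Finset.range 6).biUnion (fun k => Z.powersetCard k) := by
    intro u hu
    rw [Finset.mem_shatterer] at hu
    have huZ : u ⊆ Z := by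
      obtain ⟨A, hA, hsub⟩ := hu.exists_superset
      rw [h𝒜, Finset.mem_filter, Finset.mem_powerset] at hA
      exact hsub.trans hA.1
    have hu5 : u.card ≤ 5 := by
      apply dudley psiD
      intro T hTu
      obtain ⟨A, hA, hAT⟩ := hu hTu
      rw [h𝒜, Finset.mem_filter] at hA
      obtain ⟨-, a, rfl⟩ := hA
      refine ⟨a, ?_⟩
      intro y hyu
      constructor
      · intro hya
        have hx : y ∈ u ∩ Z.filter (fun y => 0 ≤ ∑ i, a i * psiD y i) :=
          Finset.mem_inter.2 ⟨hyu, Finset.mem_filter.2 ⟨huZ hyu, hya⟩⟩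
        rw [hAT] at hx
        exact hx
      · intro hyT
        rw [← hAT] at hyT
        exact (Finset.mem_filter.1 (Finset.mem_inter.1 hyT).2).2
    rw [Finset.mem_biUnion]
    exact ⟨u.card, Finset.mem_range.2 (by omega), Finset.mem_powersetCard.2 ⟨huZ, rfl⟩⟩
  have hAcard : 𝒜.card ≤ ∑ k ∈ Finset.range 6, Nat.choose 101 k := by
    calc 𝒜.card ≤ 𝒜.shatterer.card := Finset.card_le_card_shatterer 𝒜
      _ ≤ ((Finset.range 6).biUnion (fun k => Z.powersetCard k)).card :=
          Finset.card_le_card hA_sub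
      _ ≤ ∑ k ∈ Finset.range 6, (Z.powersetCard k).card := Finset.card_biUnion_le
      _ = ∑ k ∈ Finset.range 6, Nat.choose 101 k := by
          refine Finset.sum_congr rfl fun k _ => ?_
          rw [Finset.card_powersetCard, hZcard]
  have hfinal : 2^101 ≤ (∑ k ∈ Finset.range 6, Nat.choose 101 k)^2 := by
    calc 2^101 = Z.powerset.card := by rw [Finset.card_powerset, hZcard]
      _ ≤ (𝒜 ×ˢ 𝒜).card := hcard1
      _ = 𝒜.card * 𝒜.card := Finset.card_product _ _
      _ ≤ (∑ k ∈ Finset.range 6, Nat.choose 101 k)^2 := by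
          rw [sq]; exact Nat.mul_le_mul hAcard hAcard
  exact absurd hfinal (by decide)

/-- The range spaces `(𝒟, H_≤)` and `(𝒟, H_≥)` have constant
(finite) VC dimension: there is `n₀ ∈ ℕ` such that every finite set of closed disks
shattered by `H_≤`, and every finite set of closed disks shattered by `H_≥`, has
cardinality at most `n₀`. -/
theorem vc_dim_Hle_Hge_finite :
    ∃ n₀ : ℕ, ∀ Y ⊆ Ddisks, Y.Finite →
      (Shatters Hle Y → Y.ncard ≤ n₀) ∧ (Shatters Hge Y → Y.ncard ≤ n₀) := by
  refine ⟨100, fun Y hYD hfin => ⟨fun hsh => (hle_card hYD hfin hsh).trans (by norm_num),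
    fun hsh => ?_⟩⟩
  by_contra hc
  push_neg at hc
  obtain ⟨Y', hY'Y, hY'card⟩ := Set.exists_subset_card_eq (show 101 ≤ Y.ncard from hc)
  exact hge_no101 (hY'Y.trans hYD) (hfin.subset hY'Y) hY'card (shatters_mono hY'Y hsh)
end
end

section
/- There exists a constant C > 0 such that for every integer l ≥ 1 the following holds: let H_l = {f₁ ∩ ⋯ ∩ f_l : f₁, …, f_l ∈ H_≤ ∪ H_≥} be the family of intersections of l classifiers. Then every finite set of closed disks that is shattered by H_l has cardinality at most C · l · log(l + 1); i.e., the range space (𝒟, H_l) has VC dimension O(l log l). -/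
noncomputable section

/-- `H_l`: intersections of `l` classifiers from a family `F`. -/
def InterFamily {X : Type*} (F : Set (Set X)) (l : ℕ) : Set (Set X) :=
  {f | ∃ g : Fin l → Set X, (∀ i, g i ∈ F) ∧ f = ⋂ i, g i}

namespace VCAux

abbrev Pt := EuclideanSpace ℝ (Fin 2) × ℝ

def dot (a x : Fin 4 → ℝ) : ℝ := ∑ i, a i * x i

def φ (d : Pt) : Fin 4 → ℝ := ![d.1 0 ^ 2 + d.1 1 ^ 2 - d.2 ^ 2, d.1 0, d.1 1, d.2]

lemma dot_linear (a : Fin 4 → ℝ) : IsLinearMap ℝ (fun x => dot a x) := by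
  constructor
  · intro x y; simp [dot, mul_add, Finset.sum_add_distrib]
  · intro c x; simp [dot, Finset.mul_sum]; ring_nf; simp [mul_assoc, mul_comm, mul_left_comm]

lemma radon_bound (s : Finset (Fin 4 → ℝ))
    (h : ∀ t ⊆ s, ∃ a c, s.filter (fun x => dot a x ≤ c) = t) : s.card ≤ 5 := by
  classical
  by_contra hc
  push_neg at hc
  have hdep : ¬ AffineIndependent ℝ (fun (x : ↥s) => (x : Fin 4 → ℝ)) := by
    intro hind
    have h1 := hind.card_le_finrank_succ
    have h4 : Module.finrank ℝ (vectorSpan ℝ (Set.range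
        (fun (x : ↥s) => (x : Fin 4 → ℝ)))) ≤ 4 := by
      have := Submodule.finrank_le (vectorSpan ℝ (Set.range
        (fun (x : ↥s) => (x : Fin 4 → ℝ))))
      simpa [Module.finrank_fin_fun] using this
    rw [Fintype.card_coe] at h1
    omega
  obtain ⟨I, x, hxI, hxIc⟩ := Convex.radon_partition (𝕜 := ℝ) hdep
  obtain ⟨a, c, hac⟩ := h (s.filter (· ∈ (fun (x : ↥s) => (x : Fin 4 → ℝ)) '' I))
    (Finset.filter_subset _ _)
  have hIh : (fun (x : ↥s) => (x : Fin 4 → ℝ)) '' I ⊆ {x | dot a x ≤ c} := by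
    rintro y ⟨z, hz, rfl⟩
    have : (z : Fin 4 → ℝ) ∈ s.filter (· ∈ (fun (x : ↥s) => (x : Fin 4 → ℝ)) '' I) :=
      Finset.mem_filter.2 ⟨z.2, ⟨z, hz, rfl⟩⟩
    rw [← hac] at this
    exact (Finset.mem_filter.1 this).2
  have hIch : (fun (x : ↥s) => (x : Fin 4 → ℝ)) '' Iᶜ ⊆ {x | c < dot a x} := by
    rintro y ⟨z, hz, rfl⟩
    by_contra hy
    have hy' : dot a (z : Fin 4 → ℝ) ≤ c := not_lt.1 (by simpa using hy)
    have : (z : Fin 4 → ℝ) ∈ s.filter (fun x => dot a x ≤ c) :=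
      Finset.mem_filter.2 ⟨z.2, hy'⟩
    rw [hac, Finset.mem_filter] at this
    obtain ⟨w, hw, hwz⟩ := this.2
    have : w = z := Subtype.val_injective hwz
    exact hz (this ▸ hw)
  have h1 : x ∈ {x | dot a x ≤ c} :=
    convexHull_min hIh (convex_halfSpace_le (dot_linear a) c) hxI
  have h2 : x ∈ {x | c < dot a x} :=
    convexHull_min hIch (convex_halfSpace_gt (dot_linear a) c) hxIc
  exact absurd (Set.mem_setOf.1 h1) (not_le.2 (Set.mem_setOf.1 h2))

lemma sum_choose_le (m : ℕ) : ∀ d, ∑ k ∈ Finset.Iic d, m.choose k ≤ (m + 1) ^ d := by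
  intro d
  induction d with
  | zero =>
    have : Finset.Iic 0 = {0} := by ext k; simp
    simp [this]
  | succ d ih =>
    have hins : Finset.Iic (d + 1) = insert (d + 1) (Finset.Iic d) := by
      ext k; simp; omega
    have hnm : d + 1 ∉ Finset.Iic d := by simp
    rw [hins, Finset.sum_insert hnm]
    have h1 : m.choose (d+1) ≤ m ^ (d+1) := Nat.choose_le_pow _ _
    have h2 : m ^ (d+1) ≤ m * (m+1)^d := by
      rw [pow_succ']
      exact Nat.mul_le_mul_left m (Nat.pow_le_pow_left (Nat.le_succ m) d)
    calc m.choose (d+1) + ∑ k ∈ Finset.Iic d, m.choose k ≤ m * (m+1)^d + (m+1)^d := by omega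
      _ = (m+1)^(d+1) := by ring

lemma dist_sq (p q : EuclideanSpace ℝ (Fin 2)) :
    dist p q ^ 2 = (p 0 - q 0) ^ 2 + (p 1 - q 1) ^ 2 := by
  rw [EuclideanSpace.dist_eq, Real.sq_sqrt (by positivity)]
  simp [Fin.sum_univ_two, Real.dist_eq, sq_abs]

lemma dle_iff (q : EuclideanSpace ℝ (Fin 2)) (s : ℝ) (hs : 0 < s) (d : Pt) (hd : d ∈ Ddisks) :
    d ∈ Dle q s ↔ dot ![1, -2 * q 0, -2 * q 1, -2 * s] (φ d) ≤ s ^ 2 - q 0 ^ 2 - q 1 ^ 2 := by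
  have hr : 0 ≤ d.2 := hd
  have hdn : 0 ≤ dist d.1 q := dist_nonneg
  have hds := dist_sq d.1 q
  have key : dist d.1 q - d.2 ≤ s ↔ dist d.1 q ^ 2 ≤ (s + d.2) ^ 2 := by
    constructor
    · intro h; nlinarith
    · intro h; nlinarith
  constructor
  · intro h
    have h2 := key.1 h.2
    simp only [dot, φ, Fin.sum_univ_four]
    simp only [Matrix.cons_val_zero, Matrix.cons_val_one, Matrix.head_cons,
      Matrix.cons_val_two, Matrix.tail_cons, Matrix.cons_val_three]
    nlinarith
  · intro h
    refine ⟨hd, key.2 ?_⟩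
    simp only [dot, φ, Fin.sum_univ_four] at h
    simp only [Matrix.cons_val_zero, Matrix.cons_val_one, Matrix.head_cons,
      Matrix.cons_val_two, Matrix.tail_cons, Matrix.cons_val_three] at h
    nlinarith

lemma dge_iff (q : EuclideanSpace ℝ (Fin 2)) (s : ℝ) (hs : 0 < s) (d : Pt) (hd : d ∈ Ddisks) :
    d ∈ Dge q s ↔ (dot ![0, 0, 0, -1] (φ d) ≤ -s ∨
      dot ![-1, 2 * q 0, 2 * q 1, -2 * s] (φ d) ≤ q 0 ^ 2 + q 1 ^ 2 - s ^ 2) := by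
  have hr : 0 ≤ d.2 := hd
  have hdn : 0 ≤ dist d.1 q := dist_nonneg
  have hds := dist_sq d.1 q
  have key : s ≤ dist d.1 q + d.2 ↔ (s ≤ d.2 ∨ (s - d.2) ^ 2 ≤ dist d.1 q ^ 2) := by
    constructor
    · intro h
      rcases le_or_gt s d.2 with h' | h'
      · exact Or.inl h'
      · right; nlinarith
    · rintro (h | h)
      · linarith
      · nlinarith
  have e1 : dot ![0, 0, 0, -1] (φ d) = -d.2 := by
    simp [dot, φ, Fin.sum_univ_four]
  have e2 : (dot ![-1, 2 * q 0, 2 * q 1, -2 * s] (φ d) ≤ q 0 ^ 2 + q 1 ^ 2 - s ^ 2)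
      ↔ (s - d.2) ^ 2 ≤ dist d.1 q ^ 2 := by
    simp only [dot, φ, Fin.sum_univ_four]
    simp only [Matrix.cons_val_zero, Matrix.cons_val_one, Matrix.head_cons,
      Matrix.cons_val_two, Matrix.tail_cons, Matrix.cons_val_three]
    constructor <;> intro h <;> nlinarith
  constructor
  · intro h
    rcases key.1 h.2 with h' | h'
    · exact Or.inl (by rw [e1]; linarith)
    · exact Or.inr (e2.2 h')
  · rintro (h | h)
    · rw [e1] at h
      exact ⟨hd, key.2 (Or.inl (by linarith))⟩
    · exact ⟨hd, key.2 (Or.inr (e2.1 h))⟩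


lemma analytic (m l : ℕ) (hm : 1 ≤ m) (hl : 1 ≤ l)
    (h : (m : ℝ) * Real.log 2 ≤ 10 * l * Real.log (m + 1)) :
    (m : ℝ) ≤ 1000 * l * Real.log (l + 1) := by
  set M : ℝ := (m : ℝ) with hM
  set L : ℝ := (l : ℝ) with hL
  have hM1 : (1 : ℝ) ≤ M := Nat.one_le_cast.2 hm
  have hL1 : (1 : ℝ) ≤ L := Nat.one_le_cast.2 hl
  have hlog2 : (0.6 : ℝ) < Real.log 2 := by
    have := Real.log_two_gt_d9; linarith
  have hlogM_nonneg : 0 ≤ Real.log (M + 1) := Real.log_nonneg (by linarith)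
  have h17 : M ≤ 17 * L * Real.log (M + 1) := by
    nlinarith [h]
  have hsqrt_nonneg : 0 ≤ Real.sqrt M := Real.sqrt_nonneg M
  have hmulself : Real.sqrt M * Real.sqrt M = M := Real.mul_self_sqrt (by linarith)
  have hsqrt_pos : 0 < Real.sqrt M := Real.sqrt_pos.2 (by linarith)
  have hlog_sqrt : Real.log (M + 1) ≤ 3 * Real.sqrt M := by
    have h1 : Real.log (M + 1) = 2 * Real.log (Real.sqrt (M + 1)) := by
      rw [Real.log_sqrt (by linarith)]; ring
    have h2 : Real.log (Real.sqrt (M + 1)) ≤ Real.sqrt (M + 1) - 1 :=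
      Real.log_le_sub_one_of_pos (Real.sqrt_pos.2 (by linarith))
    have h3 : Real.sqrt (M + 1) ≤ Real.sqrt (2.25 * M) :=
      Real.sqrt_le_sqrt (by nlinarith)
    have h4 : Real.sqrt (2.25 * M) = 1.5 * Real.sqrt M := by
      rw [Real.sqrt_mul (by norm_num) M, show (2.25 : ℝ) = 1.5 ^ 2 by norm_num,
        Real.sqrt_sq (by norm_num : (0:ℝ) ≤ 1.5)]
    nlinarith
  have h51 : M ≤ 51 * L * Real.sqrt M := by nlinarith
  have hsqrtle : Real.sqrt M ≤ 51 * L := by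
    have : Real.sqrt M * Real.sqrt M ≤ (51 * L) * Real.sqrt M := by
      rw [hmulself]; exact h51
    exact le_of_mul_le_mul_right this hsqrt_pos
  have hMle : M ≤ 2601 * L ^ 2 := by nlinarith
  have hfinal : Real.log (M + 1) ≤ 14 * Real.log (L + 1) := by
    have hle : M + 1 ≤ 4096 * (L + 1) ^ 2 := by nlinarith
    have h5 : Real.log (M + 1) ≤ Real.log (4096 * (L + 1) ^ 2) :=
      Real.log_le_log (by linarith) hle
    have h6 : Real.log (4096 * (L + 1) ^ 2) = 12 * Real.log 2 + 2 * Real.log (L + 1) := by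
      rw [Real.log_mul (by norm_num) (by positivity), show (4096 : ℝ) = 2 ^ 12 by norm_num,
        Real.log_pow, Real.log_pow]
      push_cast; ring
    have h7 : Real.log 2 ≤ Real.log (L + 1) := Real.log_le_log (by norm_num) (by linarith)
    linarith
  have hlogL_pos : 0 < Real.log (L + 1) := Real.log_pos (by linarith)
  nlinarith [h17, hfinal, mul_le_mul_of_nonneg_left hfinal (by positivity : (0:ℝ) ≤ 17 * L)]


end VCAux

open VCAux

/-- There is a constant `C > 0` such that for every `l ≥ 1`, every
finite set of closed disks shattered by
`H_l = {f₁ ∩ ⋯ ∩ f_l : f₁, …, f_l ∈ H_≤ ∪ H_≥}` has cardinality at most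
`C · l · log (l + 1)`; i.e. `(𝒟, H_l)` has VC dimension `O(l log l)`. -/
theorem vc_dim_inter_family :
    ∃ C : ℝ, 0 < C ∧ ∀ l : ℕ, 1 ≤ l →
      ∀ Y ⊆ Ddisks, Y.Finite → Shatters (InterFamily (Hle ∪ Hge) l) Y →
        (Y.ncard : ℝ) ≤ C * l * Real.log (l + 1) := by
  classical
  refine ⟨1000, by norm_num, ?_⟩
  intro l hl Y hYD hYfin hshat
  have hl1 : (1 : ℝ) ≤ (l : ℝ) := Nat.one_le_cast.2 hl
  have hlogl : 0 < Real.log ((l : ℝ) + 1) := Real.log_pos (by linarith)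
  rcases Nat.eq_zero_or_pos Y.ncard with h0 | hm
  · rw [h0]
    push_cast
    have : (0:ℝ) ≤ 1000 * l * Real.log ((l:ℝ) + 1) := by positivity
    linarith
  set Z : Finset Pt := hYfin.toFinset with hZdef
  have hmemZ : ∀ a : Pt, a ∈ Z ↔ a ∈ Y := fun a => hYfin.mem_toFinset
  have hZcard : Z.card = Y.ncard := (Set.ncard_eq_toFinset_card Y hYfin).symm
  have hcardα : Fintype.card ↥Z = Y.ncard := by rw [Fintype.card_coe, hZcard]
  -- traces
  set trace : Set Pt → Finset ↥Z :=
    fun f => Finset.univ.filter (fun a : ↥Z => (a : Pt) ∈ f) with htracedef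
  have htrace : ∀ (f : Set Pt) (a : ↥Z), a ∈ trace f ↔ (a : Pt) ∈ f := by
    intro f a; simp [htracedef]
  -- halfspace trace family
  set 𝒯 : Finset (Finset ↥Z) :=
    Finset.univ.filter (fun u => ∃ a c,
      u = Finset.univ.filter (fun x : ↥Z => dot a (φ ↑x) ≤ c)) with h𝒯def
  have mem𝒯 : ∀ u : Finset ↥Z, u ∈ 𝒯 ↔ ∃ a c,
      u = Finset.univ.filter (fun x : ↥Z => dot a (φ ↑x) ≤ c) := by
    intro u; rw [h𝒯def, Finset.mem_filter]; simp only [Finset.mem_univ, true_and]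
  -- VC dimension of 𝒯 is at most 5
  have h𝒯vc : ∀ u : Finset ↥Z, 𝒯.Shatters u → u.card ≤ 5 := by
    intro u hu
    set g : ↥Z → (Fin 4 → ℝ) := fun x => φ ↑x with hgdef
    have ginj : Set.InjOn g ↑u := by
      intro a ha b hb hab
      by_contra hne
      obtain ⟨v, hv𝒯, hvu⟩ := hu (Finset.singleton_subset_iff.2 (by exact_mod_cast ha))
      obtain ⟨aa, cc, rfl⟩ := (mem𝒯 v).1 hv𝒯
      have hav : a ∈ Finset.univ.filter (fun x : ↥Z => dot aa (φ ↑x) ≤ cc) := by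
        have : a ∈ u ∩ Finset.univ.filter (fun x : ↥Z => dot aa (φ ↑x) ≤ cc) := by
          rw [hvu]; exact Finset.mem_singleton_self a
        exact (Finset.mem_inter.1 this).2
      have hbv : b ∈ Finset.univ.filter (fun x : ↥Z => dot aa (φ ↑x) ≤ cc) := by
        have := (Finset.mem_filter.1 hav).2
        refine Finset.mem_filter.2 ⟨Finset.mem_univ _, ?_⟩
        rw [show φ (↑b : Pt) = φ (↑a : Pt) from hab.symm]
        exact this
      have : b ∈ u ∩ Finset.univ.filter (fun x : ↥Z => dot aa (φ ↑x) ≤ cc) :=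
        Finset.mem_inter.2 ⟨by exact_mod_cast hb, hbv⟩
      rw [hvu, Finset.mem_singleton] at this
      exact hne this.symm
    have hcard : u.card = (u.image g).card := (Finset.card_image_of_injOn ginj).symm
    rw [hcard]
    apply radon_bound
    intro t' ht'
    obtain ⟨v, hv𝒯, hvu⟩ := hu (Finset.filter_subset (fun x => g x ∈ t') u)
    obtain ⟨aa, cc, rfl⟩ := (mem𝒯 v).1 hv𝒯
    refine ⟨aa, cc, ?_⟩
    ext x
    simp only [Finset.mem_filter, Finset.mem_image]
    constructor
    · rintro ⟨⟨b, hb, rfl⟩, hx⟩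
      have hbv : b ∈ u ∩ Finset.univ.filter (fun x : ↥Z => dot aa (φ ↑x) ≤ cc) :=
        Finset.mem_inter.2 ⟨hb, Finset.mem_filter.2 ⟨Finset.mem_univ _, hx⟩⟩
      rw [hvu, Finset.mem_filter] at hbv
      exact hbv.2
    · intro hx
      obtain ⟨b, hb, rfl⟩ := Finset.mem_image.1 (ht' hx)
      have hbt : b ∈ u.filter (fun x => g x ∈ t') :=
        Finset.mem_filter.2 ⟨hb, hx⟩
      rw [← hvu, Finset.mem_inter, Finset.mem_filter] at hbt
      exact ⟨⟨b, hb, rfl⟩, hbt.2.2⟩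
  have hvcDim : 𝒯.vcDim ≤ 5 := by
    refine Finset.sup_le fun u hu => h𝒯vc u (Finset.mem_shatterer.1 hu)
  -- Sauer-Shelah bound for 𝒯
  have h𝒯card : 𝒯.card ≤ (Y.ncard + 1) ^ 5 := by
    calc 𝒯.card ≤ 𝒯.shatterer.card := Finset.card_le_card_shatterer 𝒯
      _ ≤ ∑ k ∈ Finset.Iic 𝒯.vcDim, (Fintype.card ↥Z).choose k :=
          Finset.card_shatterer_le_sum_vcDim
      _ ≤ ∑ k ∈ Finset.Iic 5, (Fintype.card ↥Z).choose k :=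
          Finset.sum_le_sum_of_subset (Finset.Iic_subset_Iic.2 hvcDim)
      _ ≤ (Fintype.card ↥Z + 1) ^ 5 := sum_choose_le _ 5
      _ = (Y.ncard + 1) ^ 5 := by rw [hcardα]
  -- every base classifier trace is a union of two members of 𝒯
  have hYD' : ∀ a : ↥Z, (a : Pt) ∈ Ddisks := fun a => hYD ((hmemZ _).1 a.2)
  have hbase : ∀ f ∈ Hle ∪ Hge, ∃ u1 ∈ 𝒯, ∃ u2 ∈ 𝒯, trace f = u1 ∪ u2 := by
    rintro f (⟨q, s, hs, rfl⟩ | ⟨q, s, hs, rfl⟩)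
    · refine ⟨trace (Dle q s), ?_, trace (Dle q s), ?_, (Finset.union_self _).symm⟩ <;>
      · refine (mem𝒯 _).2 ⟨![1, -2 * q 0, -2 * q 1, -2 * s], s ^ 2 - q 0 ^ 2 - q 1 ^ 2, ?_⟩
        ext a
        rw [htrace, Finset.mem_filter]
        simp only [Finset.mem_univ, true_and]
        exact dle_iff q s hs (↑a) (hYD' a)
    · refine ⟨Finset.univ.filter (fun x : ↥Z => dot ![0,0,0,-1] (φ ↑x) ≤ -s), ?_,
        Finset.univ.filter (fun x : ↥Z =>
          dot ![-1, 2 * q 0, 2 * q 1, -2 * s] (φ ↑x) ≤ q 0 ^ 2 + q 1 ^ 2 - s ^ 2), ?_, ?_⟩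
      · exact (mem𝒯 _).2 ⟨_, _, rfl⟩
      · exact (mem𝒯 _).2 ⟨_, _, rfl⟩
      · ext a
        rw [htrace, Finset.mem_union, Finset.mem_filter, Finset.mem_filter]
        simp only [Finset.mem_univ, true_and]
        exact dge_iff q s hs (↑a) (hYD' a)
  set ℬ : Finset (Finset ↥Z) := (𝒯 ×ˢ 𝒯).image (fun p => p.1 ∪ p.2) with hℬdef
  have hℬcard : ℬ.card ≤ 𝒯.card ^ 2 := by
    calc ℬ.card ≤ (𝒯 ×ˢ 𝒯).card := Finset.card_image_le
      _ = 𝒯.card ^ 2 := by rw [Finset.card_product, sq]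
  have htraceB : ∀ f ∈ Hle ∪ Hge, trace f ∈ ℬ := by
    intro f hf
    obtain ⟨u1, hu1, u2, hu2, heq⟩ := hbase f hf
    exact Finset.mem_image.2 ⟨(u1, u2), Finset.mem_product.2 ⟨hu1, hu2⟩, heq.symm⟩
  set 𝒞 : Finset (Finset ↥Z) := (Fintype.piFinset (fun _ : Fin l => ℬ)).image
    (fun v => Finset.univ.filter (fun a : ↥Z => ∀ i, a ∈ v i)) with h𝒞def
  have h𝒞card : 𝒞.card ≤ ℬ.card ^ l := by
    calc 𝒞.card ≤ (Fintype.piFinset (fun _ : Fin l => ℬ)).card := Finset.card_image_le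
      _ = ℬ.card ^ l := by
          rw [Fintype.card_piFinset]
          simp
  have hall : ∀ S : Finset ↥Z, S ∈ 𝒞 := by
    intro S
    have hSsub : (Subtype.val '' (↑S : Set ↥Z) : Set Pt) ⊆ Y := by
      rintro _ ⟨a, _, rfl⟩; exact (hmemZ _).1 a.2
    obtain ⟨f, hf, hfS⟩ := hshat _ hSsub
    obtain ⟨g, hg, rfl⟩ := hf
    refine Finset.mem_image.2 ⟨fun i => trace (g i),
      Fintype.mem_piFinset.2 fun i => htraceB _ (hg i), ?_⟩
    ext a
    simp only [Finset.mem_filter, Finset.mem_univ, true_and]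
    have haY : (a : Pt) ∈ Y := (hmemZ _).1 a.2
    constructor
    · intro h
      have : (a : Pt) ∈ (⋂ i, g i) ∩ Y := by
        refine ⟨Set.mem_iInter.2 fun i => ?_, haY⟩
        exact (htrace (g i) a).1 (h i)
      rw [hfS] at this
      obtain ⟨b, hb, hba⟩ := this
      rwa [← Subtype.val_injective hba]
    · intro ha
      intro i
      have : (a : Pt) ∈ (⋂ i, g i) ∩ Y := by
        rw [hfS]; exact ⟨a, ha, rfl⟩
      exact (htrace (g i) a).2 (Set.mem_iInter.1 this.1 i)
  have hcount : 2 ^ Y.ncard ≤ (Y.ncard + 1) ^ (10 * l) := by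
    have h1 : (Finset.univ : Finset (Finset ↥Z)).card ≤ 𝒞.card :=
      Finset.card_le_card fun S _ => hall S
    have h2 : (Finset.univ : Finset (Finset ↥Z)).card = 2 ^ Y.ncard := by
      rw [Finset.card_univ, Fintype.card_finset, hcardα]
    calc 2 ^ Y.ncard = (Finset.univ : Finset (Finset ↥Z)).card := h2.symm
      _ ≤ 𝒞.card := h1
      _ ≤ ℬ.card ^ l := h𝒞card
      _ ≤ (𝒯.card ^ 2) ^ l := Nat.pow_le_pow_left hℬcard l
      _ ≤ (((Y.ncard + 1) ^ 5) ^ 2) ^ l := by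
          exact Nat.pow_le_pow_left (Nat.pow_le_pow_left h𝒯card 2) l
      _ = (Y.ncard + 1) ^ (10 * l) := by rw [← pow_mul, ← pow_mul]; congr 1; ring
  have hreal : (Y.ncard : ℝ) * Real.log 2 ≤ 10 * l * Real.log (Y.ncard + 1) := by
    have hc : ((2 : ℝ)) ^ Y.ncard ≤ ((Y.ncard : ℝ) + 1) ^ (10 * l) := by
      exact_mod_cast hcount
    have hlog := Real.log_le_log (by positivity) hc
    rw [Real.log_pow, Real.log_pow] at hlog
    push_cast at hlog ⊢
    linarith
  have := analytic Y.ncard l hm hl hreal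
  push_cast at this ⊢
  linarith
end
end

section
/- Let c₁ > 0, set c₅ = 5·(c₁ + 1/100) and c₄ = √12 · c₅. Let k, a, n > 0 be reals with c₄ · c₁ · √(k/a) ≤ 1/100, and let β be a real with 1/12 ≤ β ≤ 11/12. Then c₄ · (n + c₁·√(k·n)) · √k / √a − c₅·√(k·β·n) − c₅·√(k·(1−β)·n) + c₁·√(k·n) ≤ c₄ · n · √k / √a − c₅ · √(k·n). -/
/-- The induction step of the boundary-ball recurrence bound: with
`c₅ = 5·(c₁ + 1/100)`, `c₄ = √12 · c₅`, `c₄·c₁·√(k/a) ≤ 1/100` and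
`1/12 ≤ β ≤ 11/12`, one has
`c₄·(n + c₁·√(k·n))·√k/√a − c₅·√(k·β·n) − c₅·√(k·(1−β)·n) + c₁·√(k·n)
  ≤ c₄·n·√k/√a − c₅·√(k·n)`. -/
theorem boundary_recurrence_induction_step
    (c₁ c₄ c₅ k a n β : ℝ) (hc₁ : 0 < c₁)
    (hc₅ : c₅ = 5 * (c₁ + 1 / 100)) (hc₄ : c₄ = Real.sqrt 12 * c₅)
    (hk : 0 < k) (ha : 0 < a) (hn : 0 < n)
    (hsmall : c₄ * c₁ * Real.sqrt (k / a) ≤ 1 / 100)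
    (hβ₁ : 1 / 12 ≤ β) (hβ₂ : β ≤ 11 / 12) :
    c₄ * (n + c₁ * Real.sqrt (k * n)) * Real.sqrt k / Real.sqrt a
        - c₅ * Real.sqrt (k * (β * n)) - c₅ * Real.sqrt (k * ((1 - β) * n))
        + c₁ * Real.sqrt (k * n)
      ≤ c₄ * n * Real.sqrt k / Real.sqrt a - c₅ * Real.sqrt (k * n) := by
  set s := Real.sqrt (k * n) with hs_def
  have hs : 0 < s := Real.sqrt_pos.2 (by positivity)
  have hβ0 : (0:ℝ) ≤ β := by linarith
  have hβ1' : (0:ℝ) ≤ 1 - β := by linarith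
  have e1 : Real.sqrt (k * (β * n)) = Real.sqrt β * s := by
    rw [hs_def, ← Real.sqrt_mul hβ0]; ring_nf
  have e2 : Real.sqrt (k * ((1 - β) * n)) = Real.sqrt (1 - β) * s := by
    rw [hs_def, ← Real.sqrt_mul hβ1']; ring_nf
  have hc₅pos : 0 < c₅ := by rw [hc₅]; linarith
  have hbb : (121/2500 : ℝ) ≤ β * (1 - β) := by
    nlinarith [mul_nonneg (by linarith : (0:ℝ) ≤ β - 1/12)
      (by linarith : (0:ℝ) ≤ 11/12 - β)]
  have hsb : (11/50 : ℝ) ≤ Real.sqrt (β * (1 - β)) := by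
    rw [show (11/50:ℝ) = Real.sqrt ((11/50)^2) from (Real.sqrt_sq (by norm_num)).symm]
    exact Real.sqrt_le_sqrt (by nlinarith)
  have hsum : (6/5 : ℝ) ≤ Real.sqrt β + Real.sqrt (1 - β) := by
    nlinarith [Real.sq_sqrt hβ0, Real.sq_sqrt hβ1', Real.sqrt_nonneg β,
      Real.sqrt_nonneg (1 - β), Real.sqrt_mul hβ0 (1 - β), hsb,
      Real.sqrt_nonneg (β * (1 - β))]
  have hka : Real.sqrt (k / a) = Real.sqrt k / Real.sqrt a := Real.sqrt_div hk.le a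
  have hcoef : c₄ * c₁ * (Real.sqrt k / Real.sqrt a) + c₁ + c₅
      ≤ c₅ * (Real.sqrt β + Real.sqrt (1 - β)) := by
    rw [hka] at hsmall
    nlinarith [mul_le_mul_of_nonneg_left hsum hc₅pos.le]
  have hterm := mul_le_mul_of_nonneg_right hcoef hs.le
  have expand : c₄ * (n + c₁ * s) * Real.sqrt k / Real.sqrt a
      = c₄ * n * Real.sqrt k / Real.sqrt a
        + (c₄ * c₁ * (Real.sqrt k / Real.sqrt a)) * s := by ring
  rw [e1, e2, expand]
  nlinarith [hterm]
end

section
/- Let c₁ > 0, set c₅ = 5·(c₁ + 1/100) and c₄ = √12 · c₅. Let k, a > 0 be reals with c₄ · c₁ · √(k/a) ≤ 1/100. Let b : ℝ → ℝ be a function such that (i) b(n) = 0 for every n with a/12 ≤ n ≤ a, and (ii) for every n > a there exists a real β with 1/12 ≤ β ≤ 11/12 such that b(n) ≤ b(β·n) + b((1−β)·n + c₁·√(k·n)) + c₁·√(k·n). Then for every n ≥ a/12, b(n) ≤ c₄ · n · √k / √a − c₅ · √(k·n); in particular b(n) ≤ c₄ · n · √(k/a). -/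
set_option maxHeartbeats 1000000

/-- The bound on the recurrence `b(n)` counting the total number of
intersected (boundary) balls: with `c₅ = 5·(c₁ + 1/100)`, `c₄ = √12 · c₅` and
`c₄·c₁·√(k/a) ≤ 1/100`, if `b(n) = 0` for `a/12 ≤ n ≤ a` and for every `n > a` there
is `β ∈ [1/12, 11/12]` with
`b(n) ≤ b(β·n) + b((1−β)·n + c₁·√(k·n)) + c₁·√(k·n)`, then for all `n ≥ a/12`,
`b(n) ≤ c₄·n·√k/√a − c₅·√(k·n)`; in particular `b(n) ≤ c₄·n·√(k/a)`. -/
theorem boundary_recurrence_bound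
    (c₁ c₄ c₅ k a : ℝ) (b : ℝ → ℝ) (hc₁ : 0 < c₁)
    (hc₅ : c₅ = 5 * (c₁ + 1 / 100)) (hc₄ : c₄ = Real.sqrt 12 * c₅)
    (hk : 0 < k) (ha : 0 < a)
    (hsmall : c₄ * c₁ * Real.sqrt (k / a) ≤ 1 / 100)
    (hbase : ∀ n : ℝ, a / 12 ≤ n → n ≤ a → b n = 0)
    (hrec : ∀ n : ℝ, a < n → ∃ β : ℝ, 1 / 12 ≤ β ∧ β ≤ 11 / 12 ∧
      b n ≤ b (β * n) + b ((1 - β) * n + c₁ * Real.sqrt (k * n)) + c₁ * Real.sqrt (k * n)) :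
    ∀ n : ℝ, a / 12 ≤ n →
      b n ≤ c₄ * n * Real.sqrt k / Real.sqrt a - c₅ * Real.sqrt (k * n) ∧
      b n ≤ c₄ * n * Real.sqrt (k / a) := by
  have hsk : 0 < Real.sqrt k := Real.sqrt_pos.mpr hk
  have hsa : 0 < Real.sqrt a := Real.sqrt_pos.mpr ha
  have hc₅pos : 0 < c₅ := by rw [hc₅]; linarith
  have hkq : Real.sqrt (k / a) = Real.sqrt k / Real.sqrt a := Real.sqrt_div hk.le a
  have hs12 : (24 / 7 : ℝ) ≤ Real.sqrt 12 := by
    nlinarith [Real.sq_sqrt (show (0:ℝ) ≤ 12 by norm_num), Real.sqrt_nonneg 12]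
  have hc₅20 : (1 / 20 : ℝ) ≤ c₅ := by rw [hc₅]; linarith
  have hX : 0 ≤ c₁ * Real.sqrt (k / a) := by positivity
  have hsmall12 : Real.sqrt 12 * c₅ * c₁ * Real.sqrt (k / a) ≤ 1 / 100 := by
    rw [← hc₄]; exact hsmall
  -- c₁ √(k/a) ≤ 7/120
  have h7 : c₁ * Real.sqrt (k / a) ≤ 7 / 120 := by
    have h1 : 0 ≤ (Real.sqrt 12 - 24 / 7) * (c₅ * (c₁ * Real.sqrt (k / a))) :=
      mul_nonneg (by linarith) (mul_nonneg hc₅pos.le hX)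
    have h2 : 0 ≤ (c₅ - 1 / 20) * (c₁ * Real.sqrt (k / a)) :=
      mul_nonneg (by linarith) hX
    nlinarith [h1, h2, hsmall12]
  have hsmall' : c₄ * c₁ * (Real.sqrt k / Real.sqrt a) ≤ 1 / 100 := by
    rw [← hkq]; exact hsmall
  -- the main induction
  have key : ∀ N : ℕ, ∀ n : ℝ, a / 12 ≤ n → (⌈40 * n / a⌉).toNat ≤ N →
      b n ≤ c₄ * n * Real.sqrt k / Real.sqrt a - c₅ * Real.sqrt (k * n) := by
    intro N
    induction N with
    | zero =>
      intro n hn hμ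
      exfalso
      have h0 : (⌈40 * n / a⌉ : ℤ) ≤ (0 : ℕ) := Int.toNat_le.mp hμ
      have h1 : 40 * n / a ≤ (0 : ℤ) := Int.ceil_le.mp h0
      have h2 : 0 < 40 * n / a := by
        apply div_pos _ ha
        nlinarith
      push_cast at h1
      linarith
    | succ N ih =>
      intro n hn hμ
      have hn0 : 0 < n := lt_of_lt_of_le (by linarith) hn
      by_cases hna : n ≤ a
      · -- base case
        rw [hbase n hn hna, sub_nonneg, Real.sqrt_mul hk.le n]
        have h1 : Real.sqrt (n * a) ≤ Real.sqrt 12 * n := by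
          calc Real.sqrt (n * a) ≤ Real.sqrt (12 * (n * n)) :=
                Real.sqrt_le_sqrt (by nlinarith)
            _ = Real.sqrt 12 * n := by
                rw [Real.sqrt_mul (by norm_num : (0:ℝ) ≤ 12), Real.sqrt_mul_self hn0.le]
        have h1' : Real.sqrt n * Real.sqrt a ≤ Real.sqrt 12 * n := by
          rw [← Real.sqrt_mul hn0.le]; exact h1
        rw [hc₄, le_div_iff₀ hsa]
        calc c₅ * (Real.sqrt k * Real.sqrt n) * Real.sqrt a
            = (c₅ * Real.sqrt k) * (Real.sqrt n * Real.sqrt a) := by ring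
          _ ≤ (c₅ * Real.sqrt k) * (Real.sqrt 12 * n) := by
              apply mul_le_mul_of_nonneg_left h1' (by positivity)
          _ = Real.sqrt 12 * c₅ * n * Real.sqrt k := by ring
      · push_neg at hna
        obtain ⟨β, hβ1, hβ2, hbn⟩ := hrec n hna
        have hβ0 : (0:ℝ) ≤ β := by linarith
        have h1β : (0:ℝ) ≤ 1 - β := by linarith
        have hsn : 0 < Real.sqrt n := Real.sqrt_pos.mpr hn0
        have hkn_eq : Real.sqrt (k * n) = Real.sqrt k * Real.sqrt n := Real.sqrt_mul hk.le n
        have hsan : Real.sqrt a ≤ Real.sqrt n := Real.sqrt_le_sqrt hna.le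
        -- c₁ √k √n ≤ 7/120 n
        have hcc : c₁ * (Real.sqrt k * Real.sqrt n) ≤ 7 / 120 * n := by
          have e1 : Real.sqrt k = Real.sqrt (k / a) * Real.sqrt a := by
            rw [hkq, div_mul_cancel₀ _ hsa.ne']
          calc c₁ * (Real.sqrt k * Real.sqrt n)
              = (c₁ * Real.sqrt (k / a)) * (Real.sqrt a * Real.sqrt n) := by rw [e1]; ring
            _ ≤ (7 / 120) * (Real.sqrt a * Real.sqrt n) := by
                apply mul_le_mul_of_nonneg_right h7 (by positivity)
            _ ≤ (7 / 120) * (Real.sqrt n * Real.sqrt n) := by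
                have : Real.sqrt a * Real.sqrt n ≤ Real.sqrt n * Real.sqrt n :=
                  mul_le_mul_of_nonneg_right hsan hsn.le
                linarith
            _ = 7 / 120 * n := by rw [Real.mul_self_sqrt hn0.le]
        set m₂ := (1 - β) * n + c₁ * Real.sqrt (k * n) with hm₂def
        have hkn_nonneg : 0 ≤ c₁ * Real.sqrt (k * n) := by positivity
        have hb12n : (1 / 12 : ℝ) * n ≤ β * n := mul_le_mul_of_nonneg_right hβ1 hn0.le
        have hb12n' : (1 / 12 : ℝ) * n ≤ (1 - β) * n :=
          mul_le_mul_of_nonneg_right (by linarith) hn0.le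
        have hb11n : β * n ≤ (11 / 12 : ℝ) * n := mul_le_mul_of_nonneg_right hβ2 hn0.le
        have hb11n' : (1 - β) * n ≤ (11 / 12 : ℝ) * n :=
          mul_le_mul_of_nonneg_right (by linarith) hn0.le
        have hm₁lb : a / 12 ≤ β * n := by linarith
        have hm₁ub : β * n ≤ n - a / 40 := by linarith
        have hm₂lb : a / 12 ≤ m₂ := by rw [hm₂def]; linarith
        have hm₂ub : m₂ ≤ n - a / 40 := by
          rw [hm₂def, hkn_eq]; linarith
        -- measure decreases
        have hmeas : ∀ m : ℝ, a / 12 ≤ m → m ≤ n - a / 40 → (⌈40 * m / a⌉).toNat ≤ N := by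
          intro m hmlb hm
          have h1 : 40 * m / a + 1 ≤ 40 * n / a := by
            have e : 40 * m / a + 1 = (40 * m + a) / a := by field_simp
            rw [e, div_le_div_iff₀ ha ha]
            nlinarith
          have h2 : (⌈40 * m / a⌉ : ℤ) + 1 ≤ ⌈40 * n / a⌉ := by
            rw [← Int.ceil_add_one]
            exact Int.ceil_le_ceil h1
          have h3 : (⌈40 * n / a⌉ : ℤ) ≤ (N : ℤ) + 1 := by
            have := Int.toNat_le.mp hμ
            push_cast at this ⊢
            linarith
          exact Int.toNat_le.mpr (by linarith)
        have ih₁ := ih (β * n) hm₁lb (hmeas _ hm₁lb hm₁ub)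
        have ih₂ := ih m₂ hm₂lb (hmeas _ hm₂lb hm₂ub)
        -- √β + √(1-β) ≥ 6/5
        have hprod : (11 / 50 : ℝ) ≤ Real.sqrt β * Real.sqrt (1 - β) := by
          rw [← Real.sqrt_mul hβ0]
          have h1 : Real.sqrt ((121 : ℝ) / 2500) ≤ Real.sqrt (β * (1 - β)) :=
            Real.sqrt_le_sqrt (by nlinarith)
          have h2 : Real.sqrt ((121 : ℝ) / 2500) = 11 / 50 := by
            rw [show (121 / 2500 : ℝ) = (11 / 50) ^ 2 by norm_num,
              Real.sqrt_sq (by norm_num)]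
          linarith
        have h65 : (6 / 5 : ℝ) ≤ Real.sqrt β + Real.sqrt (1 - β) := by
          have hb2 := Real.sq_sqrt hβ0
          have hb3 := Real.sq_sqrt h1β
          have ht : (6 / 5 : ℝ) ^ 2 ≤ (Real.sqrt β + Real.sqrt (1 - β)) ^ 2 := by
            nlinarith [hprod]
          nlinarith [ht, Real.sqrt_nonneg β, Real.sqrt_nonneg (1 - β)]
        -- rewrite the IH bounds
        have e₁ : Real.sqrt (k * (β * n)) = Real.sqrt k * (Real.sqrt β * Real.sqrt n) := by
          rw [Real.sqrt_mul hk.le, Real.sqrt_mul hβ0]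
        rw [e₁] at ih₁
        have hsm₂ : Real.sqrt (1 - β) * Real.sqrt n ≤ Real.sqrt m₂ := by
          rw [← Real.sqrt_mul h1β]
          exact Real.sqrt_le_sqrt (by rw [hm₂def]; linarith)
        have ih₂' : b m₂ ≤ c₄ * m₂ * Real.sqrt k / Real.sqrt a -
            c₅ * (Real.sqrt k * (Real.sqrt (1 - β) * Real.sqrt n)) := by
          have e₂ : Real.sqrt (k * m₂) = Real.sqrt k * Real.sqrt m₂ := Real.sqrt_mul hk.le m₂
          have h4 : c₅ * (Real.sqrt k * (Real.sqrt (1 - β) * Real.sqrt n)) ≤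
              c₅ * Real.sqrt (k * m₂) := by
            rw [e₂]
            have := mul_le_mul_of_nonneg_left hsm₂ (mul_nonneg hc₅pos.le hsk.le)
            nlinarith [this]
          linarith
        -- final arithmetic
        rw [hkn_eq] at hbn ⊢
        have hA : c₅ * ((6 / 5) * (Real.sqrt k * Real.sqrt n)) ≤
            c₅ * ((Real.sqrt β + Real.sqrt (1 - β)) * (Real.sqrt k * Real.sqrt n)) := by
          apply mul_le_mul_of_nonneg_left _ hc₅pos.le
          apply mul_le_mul_of_nonneg_right h65 (by positivity)
        have hB : c₄ * c₁ * (Real.sqrt k / Real.sqrt a) * (Real.sqrt k * Real.sqrt n) ≤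
            (1 / 100) * (Real.sqrt k * Real.sqrt n) :=
          mul_le_mul_of_nonneg_right hsmall' (by positivity)
        have hm₂' : m₂ = (1 - β) * n + c₁ * (Real.sqrt k * Real.sqrt n) := by
          rw [hm₂def, hkn_eq]
        have hexp : c₄ * m₂ * (Real.sqrt k / Real.sqrt a) =
            c₄ * ((1 - β) * n + c₁ * (Real.sqrt k * Real.sqrt n)) *
              (Real.sqrt k / Real.sqrt a) := by
          rw [← hm₂']
        rw [mul_div_assoc] at ih₁ ih₂' ⊢
        rw [hc₅] at hA ih₁ ih₂' ⊢
        linarith [hbn, ih₁, ih₂', hA, hB, hexp]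
  intro n hn
  have h1 := key (⌈40 * n / a⌉).toNat n hn le_rfl
  refine ⟨h1, ?_⟩
  have h2 : 0 ≤ c₅ * Real.sqrt (k * n) := by positivity
  have h3 : c₄ * n * Real.sqrt (k / a) = c₄ * n * Real.sqrt k / Real.sqrt a := by
    rw [hkq]; ring
  linarith
end

section
/- Let X be a finite nonempty set, Y ⊆ X a finite nonempty subset, and h an arbitrary set; write X̄(h) = |h ∩ X| / |X| and Ȳ(h) = |h ∩ Y| / |Y|. Let 0 < p < 1 and 0 < ε < 1, and suppose the relative (p, ε)-approximation condition holds for h: if X̄(h) ≥ p then (1−ε)·X̄(h) ≤ Ȳ(h) ≤ (1+ε)·X̄(h), and if X̄(h) < p then X̄(h) − ε·p ≤ Ȳ(h) ≤ X̄(h) + ε·p. Then for every t > 0: if Ȳ(h) ≤ t·p, then X̄(h) ≤ max(p, t·p/(1−ε)). -/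
noncomputable section

/-- The measure of a classifier `h` in a finite set `X`: `|h ∩ X| / |X|`. -/
def meas {α : Type*} (h X : Set α) : ℝ := ((h ∩ X).ncard : ℝ) / (X.ncard : ℝ)

/-- If `Y ⊆ X` satisfies the relative `(p, ε)`-approximation
condition for a classifier `h`, then an upper bound `Ȳ(h) ≤ t·p` on the sample
measure implies `X̄(h) ≤ max(p, t·p/(1−ε))`. -/
theorem relative_approx_transfer {α : Type*}
    (X Y h : Set α) (hXfin : X.Finite) (hXne : X.Nonempty)
    (hYX : Y ⊆ X) (hYne : Y.Nonempty)
    (p ε : ℝ) (hp0 : 0 < p) (hp1 : p < 1) (hε0 : 0 < ε) (hε1 : ε < 1)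
    (happrox_ge : p ≤ meas h X →
      (1 - ε) * meas h X ≤ meas h Y ∧ meas h Y ≤ (1 + ε) * meas h X)
    (happrox_lt : meas h X < p →
      meas h X - ε * p ≤ meas h Y ∧ meas h Y ≤ meas h X + ε * p) :
    ∀ t : ℝ, 0 < t → meas h Y ≤ t * p → meas h X ≤ max p (t * p / (1 - ε)) := by
  intro t ht hty
  rcases lt_or_ge (meas h X) p with hc | hc
  · exact le_max_of_le_left hc.le
  · refine le_max_of_le_right ?_
    have h1 := (happrox_ge hc).1
    rw [le_div_iff₀ (by linarith : (0:ℝ) < 1 - ε)]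
    calc meas h X * (1 - ε) = (1 - ε) * meas h X := mul_comm _ _
      _ ≤ meas h Y := h1
      _ ≤ t * p := hty
end
end
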